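/- arXiv:math/0509459 — 2 statements merged into one kernel-verified Lean document; each statement's English description precedes it below -/
import Mathlib

section
/- For every ξ ∈ ℝⁿ, the function g ↦ φ_ξ^K(g·0) on the group G = ℝⁿ ⋊ K is positive definite: for all m > 0, c_1,…,c_m ∈ ℂ and g_1,…,g_m ∈ G, we have ∑_{i,j} φ_ξ^K(g_j⁻¹ g_i · 0) · conj(c_j) · c_i ≥ 0 (the sum is real and nonnegative). -/
open MeasureTheory Complex
open Matrix

noncomputable section

/-- Complexification of a real matrix. -/
def matC {n : ℕ} (A : Matrix (Fin n) (Fin n) ℝ) : Matrix (Fin n) (Fin n) ℂ :=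
  A.map (fun r => (r : ℂ))

/-- The ℂ-bilinear extension of the standard inner product on ℝⁿ. -/
def bC {n : ℕ} (x ξ : Fin n → ℂ) : ℂ := ∑ i, x i * ξ i

/-- Inclusion of ℝⁿ into ℂⁿ. -/
def cplx {n : ℕ} (x : Fin n → ℝ) : Fin n → ℂ := fun i => (x i : ℂ)

lemma bC_real {n : ℕ} (x ξ : Fin n → ℝ) (A : Matrix (Fin n) (Fin n) ℝ) :
    bC (cplx x) ((matC A).mulVec (cplx ξ)) = ((x ⬝ᵥ A.mulVec ξ : ℝ) : ℂ) := by
  simp [bC, cplx, matC, Matrix.mulVec, dotProduct, Finset.mul_sum]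

/-- The averaged function `φ_ξ^K(x) = ∫_K exp(i b(x, k·ξ)) dμ_K(k)`, where the
compact group `K` acts on ℂⁿ through `ρ` by the complexification of its real
orthogonal action. -/
def phiK {n : ℕ} {K : Type} [Group K] [TopologicalSpace K] [MeasurableSpace K]
    (μ : Measure K) (ρ : K →* Matrix.orthogonalGroup (Fin n) ℝ)
    (ξ : Fin n → ℂ) (x : Fin n → ℝ) : ℂ :=
  ∫ k, Complex.exp (Complex.I * bC (cplx x) ((matC ((ρ k : Matrix.orthogonalGroup (Fin n) ℝ) : Matrix (Fin n) (Fin n) ℝ)).mulVec ξ)) ∂μ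

open scoped ComplexOrder

/-- for real `ξ`, the function `g ↦ φ_ξ^K(g·0)` on `G = ℝⁿ ⋊ K` is
positive definite.  An element `g` of `G` is recorded as a pair `(v, k)`, acting
on ℝⁿ by `x ↦ v + k·x`; then `g_j⁻¹ g_i · 0 = k_j⁻¹ · (v_i - v_j)`. -/
theorem stmt3 {n : ℕ} {K : Type} [Group K] [TopologicalSpace K] [IsTopologicalGroup K]
    [CompactSpace K] [MeasurableSpace K] [BorelSpace K]
    (μ : Measure K) [μ.IsHaarMeasure] [IsProbabilityMeasure μ]
    (ρ : K →* Matrix.orthogonalGroup (Fin n) ℝ)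
    (hρ : Continuous fun k => ((ρ k : Matrix.orthogonalGroup (Fin n) ℝ) : Matrix (Fin n) (Fin n) ℝ))
    (ξ : Fin n → ℝ)
    (m : ℕ) (hm : 0 < m) (c : Fin m → ℂ) (g : Fin m → (Fin n → ℝ) × K) :
    0 ≤ ∑ i, ∑ j,
      phiK μ ρ (cplx ξ)
        (Matrix.mulVec (((ρ (g j).2)⁻¹ : Matrix.orthogonalGroup (Fin n) ℝ) : Matrix (Fin n) (Fin n) ℝ)
          ((g i).1 - (g j).1)) * (starRingEnd ℂ) (c j) * c i := by
  classical
  set M : K → Matrix (Fin n) (Fin n) ℝ :=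
    fun k => ((ρ k : Matrix.orthogonalGroup (Fin n) ℝ) : Matrix (Fin n) (Fin n) ℝ) with hM
  set a : Fin m → K → ℝ := fun i k => (g i).1 ⬝ᵥ (M k).mulVec ξ with ha
  have hacont : ∀ i, Continuous (a i) := by
    intro i
    simp only [ha, dotProduct, Matrix.mulVec]
    exact continuous_finset_sum _ fun l _ => continuous_const.mul
      (continuous_finset_sum _ fun j' _ => ((hρ.matrix_elem l j').mul continuous_const))
  -- the elementary positive-definite function F i k
  set F : Fin m → K → ℂ := fun i k => Complex.exp (Complex.I * (a i k : ℂ)) * c i with hF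
  have hFcont : ∀ i, Continuous (F i) := by
    intro i
    exact (Complex.continuous_exp.comp (continuous_const.mul
      (Complex.continuous_ofReal.comp (hacont i)))).mul continuous_const
  have key : ∀ i j, phiK μ ρ (cplx ξ)
      (Matrix.mulVec (((ρ (g j).2)⁻¹ : Matrix.orthogonalGroup (Fin n) ℝ) : Matrix (Fin n) (Fin n) ℝ)
        ((g i).1 - (g j).1)) * (starRingEnd ℂ) (c j) * c i
      = ∫ k, F i k * (starRingEnd ℂ) (F j k) ∂μ := by
    intro i j
    have step1 : ∀ k : K,
        (Matrix.mulVec (((ρ (g j).2)⁻¹ : Matrix.orthogonalGroup (Fin n) ℝ) : Matrix (Fin n) (Fin n) ℝ)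
          ((g i).1 - (g j).1)) ⬝ᵥ (M k).mulVec ξ
        = ((g i).1 - (g j).1) ⬝ᵥ (M ((g j).2 * k)).mulVec ξ := by
      intro k
      have hinv : (((ρ (g j).2)⁻¹ : Matrix.orthogonalGroup (Fin n) ℝ) : Matrix (Fin n) (Fin n) ℝ)
          = (M ((g j).2))ᵀ := rfl
      rw [hinv, Matrix.mulVec_transpose, ← Matrix.dotProduct_mulVec,
        Matrix.mulVec_mulVec]
      congr 1
      simp only [hM, ← _root_.map_mul, ← Submonoid.coe_mul]
    have expand : phiK μ ρ (cplx ξ)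
        (Matrix.mulVec (((ρ (g j).2)⁻¹ : Matrix.orthogonalGroup (Fin n) ℝ) : Matrix (Fin n) (Fin n) ℝ)
          ((g i).1 - (g j).1))
        = ∫ k, Complex.exp (Complex.I * ((((g i).1 - (g j).1) ⬝ᵥ (M k).mulVec ξ : ℝ) : ℂ)) ∂μ := by
      rw [phiK]
      have : ∀ k : K, Complex.exp (Complex.I * bC (cplx
          (Matrix.mulVec (((ρ (g j).2)⁻¹ : Matrix.orthogonalGroup (Fin n) ℝ) : Matrix (Fin n) (Fin n) ℝ)
            ((g i).1 - (g j).1))) ((matC (M k)).mulVec (cplx ξ)))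
          = Complex.exp (Complex.I * ((((g i).1 - (g j).1) ⬝ᵥ (M ((g j).2 * k)).mulVec ξ : ℝ) : ℂ)) := by
        intro k
        rw [bC_real, step1]
      rw [integral_congr_ae (Filter.EventuallyEq.of_eq (funext this))]
      exact integral_mul_left_eq_self
        (fun k => Complex.exp (Complex.I * ((((g i).1 - (g j).1) ⬝ᵥ (M k).mulVec ξ : ℝ) : ℂ))) ((g j).2)
    rw [expand]
    rw [mul_assoc, ← integral_mul_const]
    congr 1
    funext k
    have hsub : (((g i).1 - (g j).1) ⬝ᵥ (M k).mulVec ξ) = a i k - a j k := by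
      simp [ha, sub_dotProduct]
    rw [hsub]
    simp only [hF]
    have hc : (starRingEnd ℂ) (Complex.exp (Complex.I * (a j k : ℂ)))
        = Complex.exp (-(Complex.I * (a j k : ℂ))) := by
      rw [← Complex.exp_conj]; congr 1
      rw [_root_.map_mul, Complex.conj_I, Complex.conj_ofReal]; ring
    have he : Complex.exp (Complex.I * ((a i k - a j k : ℝ) : ℂ))
        = Complex.exp (Complex.I * (a i k : ℂ)) * Complex.exp (-(Complex.I * (a j k : ℂ))) := by
      rw [← Complex.exp_add]; congr 1; push_cast; ring
    rw [_root_.map_mul, hc, he]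
    ring
  calc (0:ℂ) ≤ ((∫ k, Complex.normSq (∑ i, F i k) ∂μ : ℝ) : ℂ) := by
        rw [Complex.zero_le_real]
        exact integral_nonneg fun k => Complex.normSq_nonneg _
    _ = ∫ k, ((Complex.normSq (∑ i, F i k) : ℝ) : ℂ) ∂μ := (integral_ofReal).symm
    _ = ∫ k, (∑ i, F i k) * (starRingEnd ℂ) (∑ j, F j k) ∂μ := by
        congr 1; funext k; rw [Complex.mul_conj]
    _ = ∫ k, ∑ i, ∑ j, F i k * (starRingEnd ℂ) (F j k) ∂μ := by
        congr 1; funext k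
        rw [map_sum, Finset.sum_mul_sum]
    _ = ∑ i, ∑ j, ∫ k, F i k * (starRingEnd ℂ) (F j k) ∂μ := by
        have hIntij : ∀ i j : Fin m, Integrable (fun k => F i k * (starRingEnd ℂ) (F j k)) μ := by
          intro i j
          exact ((hFcont i).mul (continuous_star.comp (hFcont j))).integrable_of_hasCompactSupport
            (HasCompactSupport.of_compactSpace _)
        rw [integral_finset_sum _ (fun i _ => integrable_finset_sum _ fun j _ => hIntij i j)]
        exact Finset.sum_congr rfl fun i _ => integral_finset_sum _ fun j _ => hIntij i j
    _ = ∑ i, ∑ j, phiK μ ρ (cplx ξ)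
        (Matrix.mulVec (((ρ (g j).2)⁻¹ : Matrix.orthogonalGroup (Fin n) ℝ) : Matrix (Fin n) (Fin n) ℝ)
          ((g i).1 - (g j).1)) * (starRingEnd ℂ) (c j) * c i := by
        exact Finset.sum_congr rfl fun i _ => Finset.sum_congr rfl fun j _ => (key i j).symm
end
end

section
/- Suppose K ⊆ O(n) is transitive on the unit sphere, n > 1. Then the map sending c ∈ ℂ* to the quadric Q_c and 0 to Q_0 ∪ {0} gives a bijection between ℂ and the set of equivalence classes of ℂⁿ under the relation ξ ∼ ξ' iff p(ξ) = p(ξ') for all K_ℂ-invariant polynomials p; equivalently, two points ξ, ξ' ∈ ℂⁿ satisfy p(ξ) = p(ξ') for all K_ℂ-invariant polynomials p if and only if b(ξ,ξ) = b(ξ',ξ'). -/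
noncomputable section

section Helpers
open MvPolynomial

/-- A complex multivariate polynomial vanishing at all real points is zero. -/
theorem vanish_real_zero {n : ℕ} (p : MvPolynomial (Fin n) ℂ)
    (h : ∀ x : Fin n → ℝ, MvPolynomial.eval (fun i => (x i : ℂ)) p = 0) : p = 0 := by
  have key : ∀ j : ℕ, ∀ ξ : Fin n → ℂ,
      (∀ i : Fin n, j ≤ (i : ℕ) → ∃ r : ℝ, ξ i = (r : ℂ)) → eval ξ p = 0 := by
    intro j
    induction j with
    | zero =>
      intro ξ hξ
      have : ξ = fun i => (((hξ i (Nat.zero_le _)).choose : ℝ) : ℂ) := by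
        funext i; exact (hξ i (Nat.zero_le _)).choose_spec
      rw [this]; exact h _
    | succ j ih =>
      intro ξ hξ
      by_cases hj : j < n
      · set j' : Fin n := ⟨j, hj⟩
        set u : Polynomial ℂ :=
          MvPolynomial.aeval (fun i => if i = j' then Polynomial.X else Polynomial.C (ξ i)) p with hu
        have hueval : ∀ t : ℂ, Polynomial.eval t u = eval (Function.update ξ j' t) p := by
          intro t
          have := MvPolynomial.comp_aeval_apply (Polynomial.aeval t : Polynomial ℂ →ₐ[ℂ] ℂ)
            (f := fun i => if i = j' then Polynomial.X else Polynomial.C (ξ i)) p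
          have h2 : (fun i => (Polynomial.aeval t) (if i = j' then Polynomial.X else Polynomial.C (ξ i)))
              = Function.update ξ j' t := by
            funext i
            by_cases hi : i = j' <;> simp [hi, Function.update]
          rw [hu]
          calc Polynomial.eval t (MvPolynomial.aeval (fun i => if i = j' then Polynomial.X else Polynomial.C (ξ i)) p)
              = Polynomial.aeval t (MvPolynomial.aeval (fun i => if i = j' then Polynomial.X else Polynomial.C (ξ i)) p) := by
                rw [Polynomial.coe_aeval_eq_eval]
            _ = MvPolynomial.aeval (Function.update ξ j' t) p := by rw [this, h2]
            _ = eval (Function.update ξ j' t) p := by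
                rw [← MvPolynomial.coe_aeval_eq_eval]; rfl
        have hroots : ∀ r : ℝ, Polynomial.eval (r : ℂ) u = 0 := by
          intro r
          rw [hueval]
          apply ih
          intro i hi
          by_cases hij : i = j'
          · exact ⟨r, by subst hij; simp⟩
          · have : j + 1 ≤ (i : ℕ) := by
              rcases Nat.lt_or_ge (i : ℕ) (j+1) with h1 | h1
              · exfalso; apply hij; apply Fin.ext
                show (i : ℕ) = j
                omega
              · exact h1
            obtain ⟨r', hr'⟩ := hξ i this
            refine ⟨r', ?_⟩
            rw [Function.update_of_ne hij]; exact hr'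
        have hu0 : u = 0 := by
          apply Polynomial.eq_zero_of_infinite_isRoot
          apply Set.Infinite.mono (s := Set.range (fun r : ℝ => (r : ℂ)))
          · rintro _ ⟨r, rfl⟩; exact hroots r
          · exact Set.infinite_range_of_injective Complex.ofReal_injective
        have := hueval (ξ j')
        rw [hu0, Function.update_eq_self] at this
        simpa using this.symm
      · apply ih
        intro i hi
        exact absurd (lt_of_le_of_lt hi i.isLt) (by omega)
  exact MvPolynomial.funext (fun x => by rw [key n x (fun i hi => absurd (lt_of_le_of_lt hi i.isLt) (by omega)), map_zero])

end Helpers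

section Helpers2
open Polynomial

lemma coeff_comp_negX (u : Polynomial ℂ) (k : ℕ) :
    (u.comp (-Polynomial.X)).coeff k = (-1) ^ k * u.coeff k := by
  induction u using Polynomial.induction_on' with
  | add p q hp hq => simp [Polynomial.add_comp, hp, hq, mul_add]
  | monomial m a =>
    rw [Polynomial.monomial_comp, neg_pow]
    have : ((-1 : ℂ[X]) ^ m) = Polynomial.C ((-1 : ℂ) ^ m) := by
      rw [map_pow, map_neg, map_one]
    rw [this]
    simp only [Polynomial.coeff_monomial, ← mul_assoc, ← Polynomial.C_mul,
      Polynomial.coeff_C_mul, Polynomial.coeff_X_pow]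
    by_cases hmk : m = k
    · subst hmk; simp [mul_comm]
    · simp [hmk, Ne.symm hmk]

lemma exists_even_rep {u : Polynomial ℂ} (h : ∀ t : ℂ, u.eval (-t) = u.eval t) :
    ∃ h' : Polynomial ℂ, ∀ t : ℂ, h'.eval (t ^ 2) = u.eval t := by
  have hcomp : u.comp (-Polynomial.X) = u :=
    Polynomial.funext (fun t => by simp [Polynomial.eval_comp, h])
  have hodd : ∀ k, k % 2 = 1 → u.coeff k = 0 := by
    intro k hk
    have h1 := coeff_comp_negX u k
    rw [hcomp, (Nat.odd_iff.mpr hk).neg_one_pow, neg_one_mul] at h1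
    have h2 : (2 : ℂ) * u.coeff k = 0 := by linear_combination h1
    simpa using h2
  refine ⟨∑ k ∈ Finset.range (u.natDegree + 1), Polynomial.C (u.coeff (2 * k)) * Polynomial.X ^ k,
    fun t => ?_⟩
  rw [Polynomial.eval_finset_sum]
  simp only [Polynomial.eval_mul, Polynomial.eval_C, Polynomial.eval_pow, Polynomial.eval_X]
  rw [Polynomial.eval_eq_sum_range' (n := 2 * u.natDegree + 2) (by omega) t]
  calc ∑ k ∈ Finset.range (u.natDegree + 1), u.coeff (2 * k) * (t ^ 2) ^ k
      = ∑ i ∈ (Finset.range (2 * u.natDegree + 2)).filter (fun i => i % 2 = 0),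
          u.coeff i * t ^ i := by
        refine Finset.sum_nbij' (i := fun k => 2 * k) (j := fun i => i / 2) ?_ ?_ ?_ ?_ ?_
        · intro k hk
          simp only [Finset.mem_filter, Finset.mem_range] at *
          omega
        · intro i hi
          simp only [Finset.mem_filter, Finset.mem_range] at *
          omega
        · intro k hk; show 2 * k / 2 = k; omega
        · intro i hi
          simp only [Finset.mem_filter, Finset.mem_range] at hi
          show 2 * (i / 2) = i
          omega
        · intro k hk
          rw [← pow_mul]
    _ = ∑ i ∈ Finset.range (2 * u.natDegree + 2), u.coeff i * t ^ i := by
        apply Finset.sum_filter_of_ne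
        intro i _ hne
        by_contra hodd'
        exact hne (by rw [hodd i (by omega), zero_mul])

end Helpers2

open Matrix

open MvPolynomial in
lemma eval_sumsq {n : ℕ} (ξ : Fin n → ℂ) :
    MvPolynomial.eval ξ (∑ i, MvPolynomial.X i ^ 2) = bC ξ ξ := by
  simp [bC, sq]

lemma matC_mulVec {n : ℕ} (A : Matrix (Fin n) (Fin n) ℝ) (x : Fin n → ℝ) :
    (matC A).mulVec (fun i => (x i : ℂ)) = fun i => ((A.mulVec x i : ℝ) : ℂ) := by
  funext i
  simp only [matC, Matrix.mulVec, dotProduct, Matrix.map_apply]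
  norm_cast

lemma matC_orth {n : ℕ} (A : Matrix (Fin n) (Fin n) ℝ) (hA : Aᵀ * A = 1) :
    (matC A)ᵀ * matC A = 1 := by
  have : matC A = A.map (Complex.ofRealHom : ℝ →+* ℂ) := rfl
  rw [this, ← Matrix.transpose_map, ← Matrix.map_mul, hA,
    Matrix.map_one _ (map_zero _) (map_one _)]

lemma sumsq_mulVec {n : ℕ} (B : Matrix (Fin n) (Fin n) ℂ) (hB : Bᵀ * B = 1)
    (v : Fin n → ℂ) : ∑ i, (B.mulVec v i) ^ 2 = ∑ i, v i ^ 2 := by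
  have h1 : ∀ w : Fin n → ℂ, ∑ i, w i ^ 2 = w ⬝ᵥ w := by
    intro w; simp [dotProduct, sq]
  rw [h1, h1, Matrix.dotProduct_mulVec]
  have : (B.mulVec v) ᵥ* B = v := by
    rw [show B = Bᵀᵀ by simp, Matrix.vecMul_transpose, Matrix.transpose_transpose,
      Matrix.mulVec_mulVec, hB, Matrix.one_mulVec]
  rw [this]

/-- if `K ⊆ O(n)`, `n > 1`, is transitive on the unit sphere,
then two points `ξ, ξ' ∈ ℂⁿ` take the same value under every invariant
polynomial (invariance under the complexified action of `K`, equivalently under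
`K_ℂ`) if and only if `b(ξ,ξ) = b(ξ',ξ')`.  Thus `ℂⁿ//K_ℂ ≅ ℂ`, the class of
`ξ` corresponding to `c = b(ξ,ξ)` (quadric `Q_c` for `c ≠ 0`, `Q_0 ∪ {0}` for
`c = 0`). -/
theorem stmt10 {n : ℕ} (hn : 1 < n)
    (K : Subgroup (Matrix.orthogonalGroup (Fin n) ℝ))
    (hKtrans : ∀ x y : Fin n → ℝ, (∑ i, x i ^ 2) = 1 → (∑ i, y i ^ 2) = 1 →
      ∃ k ∈ K, Matrix.mulVec ((k : Matrix.orthogonalGroup (Fin n) ℝ) : Matrix (Fin n) (Fin n) ℝ) x = y)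
    (ξ ξ' : Fin n → ℂ) :
    (∀ p : MvPolynomial (Fin n) ℂ,
        (∀ k ∈ K, ∀ v : Fin n → ℂ,
          MvPolynomial.eval
            (Matrix.mulVec (matC ((k : Matrix.orthogonalGroup (Fin n) ℝ) : Matrix (Fin n) (Fin n) ℝ)) v) p
            = MvPolynomial.eval v p) →
        MvPolynomial.eval ξ p = MvPolynomial.eval ξ' p) ↔
      bC ξ ξ = bC ξ' ξ' := by
  have horth : ∀ k : Matrix.orthogonalGroup (Fin n) ℝ,
      ((k : Matrix (Fin n) (Fin n) ℝ))ᵀ * (k : Matrix (Fin n) (Fin n) ℝ) = 1 := by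
    intro k
    have := (Matrix.mem_unitaryGroup_iff'.mp k.2)
    simpa [Matrix.star_eq_conjTranspose, Matrix.conjTranspose_eq_transpose_of_trivial] using this
  constructor
  · -- forward: apply hypothesis to ∑ Xᵢ²
    intro hinv
    have hs : ∀ k ∈ K, ∀ v : Fin n → ℂ,
        MvPolynomial.eval
          (Matrix.mulVec (matC ((k : Matrix.orthogonalGroup (Fin n) ℝ) : Matrix (Fin n) (Fin n) ℝ)) v)
          (∑ i, MvPolynomial.X i ^ 2)
          = MvPolynomial.eval v (∑ i, MvPolynomial.X i ^ 2) := by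
      intro k _ v
      have hB := matC_orth _ (horth k)
      have := sumsq_mulVec _ hB v
      simpa [eval_sumsq, bC, sq] using this
    have := hinv _ hs
    rwa [eval_sumsq, eval_sumsq] at this
  · -- backward direction
    intro hb p hp
    have hn0 : 0 < n := by omega
    set i0 : Fin n := ⟨0, hn0⟩ with hi0
    set e0 : Fin n → ℝ := fun i => if i = i0 then 1 else 0 with he0
    have he0sq : (∑ i, e0 i ^ 2) = 1 := by
      simp [he0, apply_ite (· ^ (2:ℕ))]
    have hne0sq : (∑ i, (-e0) i ^ 2) = 1 := by
      simpa [neg_sq] using he0sq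
    -- the one-variable restriction
    set u : Polynomial ℂ :=
      MvPolynomial.aeval (fun i => if i = i0 then Polynomial.X else 0) p with hu
    have hueval : ∀ t : ℂ,
        Polynomial.eval t u = MvPolynomial.eval (fun i => if i = i0 then t else 0) p := by
      intro t
      have hcomp := MvPolynomial.comp_aeval_apply (Polynomial.aeval t : Polynomial ℂ →ₐ[ℂ] ℂ)
        (f := fun i => if i = i0 then Polynomial.X else 0) p
      have h2 : (fun i => (Polynomial.aeval t : Polynomial ℂ →ₐ[ℂ] ℂ)
            (if i = i0 then Polynomial.X else (0 : Polynomial ℂ)))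
          = fun i => if i = i0 then (t : ℂ) else 0 := by
        funext i; by_cases hi : i = i0 <;> simp [hi]
      calc Polynomial.eval t u = Polynomial.aeval t u := by rw [Polynomial.coe_aeval_eq_eval]
        _ = MvPolynomial.eval (fun i => if i = i0 then t else 0) p := by
            rw [hu, hcomp, h2, ← MvPolynomial.coe_aeval_eq_eval]; rfl
    -- evenness of u
    have hueven : ∀ t : ℂ, Polynomial.eval (-t) u = Polynomial.eval t u := by
      intro t
      obtain ⟨k, hkK, hk⟩ := hKtrans e0 (-e0) he0sq hne0sq
      set A : Matrix (Fin n) (Fin n) ℝ := (k : Matrix (Fin n) (Fin n) ℝ) with hA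
      have hAcol : ∀ i, A i i0 = -e0 i := by
        intro i
        have := congrFun hk i
        simpa [Matrix.mulVec, dotProduct, he0, mul_ite] using this
      have hmv : (matC A).mulVec (fun i => if i = i0 then t else 0)
          = fun i => if i = i0 then -t else 0 := by
        funext i
        have : (matC A).mulVec (fun i => if i = i0 then t else 0) i = (A i i0 : ℂ) * t := by
          simp [matC, Matrix.mulVec, dotProduct, mul_ite]
        rw [this, hAcol i]
        by_cases hi : i = i0 <;> simp [hi, he0]
      have := hp k hkK (fun i => if i = i0 then t else 0)
      rw [hmv] at this
      rw [hueval, hueval]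
      exact this
    obtain ⟨h', hh'⟩ := exists_even_rep hueven
    -- the key real identity
    have key : ∀ x : Fin n → ℝ,
        MvPolynomial.eval (fun i => (x i : ℂ)) p
          = Polynomial.eval (((∑ i, x i ^ 2 : ℝ) : ℝ) : ℂ) h' := by
      intro x
      set c : ℝ := ∑ i, x i ^ 2 with hc
      have hc0 : 0 ≤ c := Finset.sum_nonneg fun i _ => sq_nonneg _
      by_cases hczero : c = 0
      · have hx0 : x = 0 := by
          funext i
          have := (Finset.sum_eq_zero_iff_of_nonneg (fun i _ => sq_nonneg (x i))).mp hczero i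
            (Finset.mem_univ i)
          exact pow_eq_zero_iff (by norm_num) |>.mp this
        subst hx0
        have h1 : (fun i => ((0 : Fin n → ℝ) i : ℂ)) = fun i => if i = i0 then (0:ℂ) else 0 := by
          funext i; simp
        rw [h1, ← hueval 0, ← hh' 0]
        norm_num [hczero]
      · set r : ℝ := Real.sqrt c with hr
        have hrpos : 0 < r := Real.sqrt_pos.mpr (lt_of_le_of_ne hc0 (Ne.symm hczero))
        have hr2 : r ^ 2 = c := Real.sq_sqrt hc0
        set y : Fin n → ℝ := r⁻¹ • x with hy
        have hysq : (∑ i, y i ^ 2) = 1 := by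
          simp only [hy, Pi.smul_apply, smul_eq_mul, mul_pow, ← Finset.mul_sum, ← hc]
          rw [← hr2]
          field_simp
        obtain ⟨k, hkK, hk⟩ := hKtrans y e0 hysq he0sq
        set A : Matrix (Fin n) (Fin n) ℝ := (k : Matrix (Fin n) (Fin n) ℝ) with hA
        have hAx : A.mulVec x = r • e0 := by
          have hxy : x = r • y := by
            rw [hy, smul_smul, mul_inv_cancel₀ (ne_of_gt hrpos), one_smul]
          rw [hxy, Matrix.mulVec_smul, hk]
        have := hp k hkK (fun i => (x i : ℂ))
        rw [matC_mulVec, hAx] at this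
        have h3 : (fun i => (((r • e0) i : ℝ) : ℂ)) = fun i => if i = i0 then (r : ℂ) else 0 := by
          funext i; by_cases hi : i = i0 <;> simp [hi, he0]
        rw [h3, ← hueval (r : ℂ)] at this
        rw [← this, ← hh' (r : ℂ)]
        congr 1
        rw [← hr2]
        norm_cast
    -- polynomial identity p = h'(∑ Xᵢ²)
    set q : MvPolynomial (Fin n) ℂ :=
      Polynomial.eval₂ MvPolynomial.C (∑ i, MvPolynomial.X i ^ 2) h' with hq
    have hqeval : ∀ ζ : Fin n → ℂ, MvPolynomial.eval ζ q = Polynomial.eval (bC ζ ζ) h' := by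
      intro ζ
      rw [hq, Polynomial.hom_eval₂]
      have h4 : (MvPolynomial.eval ζ).comp (MvPolynomial.C : ℂ →+* MvPolynomial (Fin n) ℂ)
          = RingHom.id ℂ := RingHom.ext fun a => MvPolynomial.eval_C a
      rw [h4, eval_sumsq]
      rfl
    have hpq : p = q := by
      have hsub : p - q = 0 := by
        apply vanish_real_zero
        intro x
        rw [map_sub, key x, hqeval]
        have : bC (fun i => (x i : ℂ)) (fun i => (x i : ℂ)) = ((∑ i, x i ^ 2 : ℝ) : ℂ) := by
          simp [bC]
          simp [sq]
        rw [this]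
        ring
      exact sub_eq_zero.mp hsub
    rw [hpq, hqeval, hqeval, hb]
end
end
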